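/- For every surreal number x, the class No^{⊒x} = { y : x ⊑ y } of numbers extending x is a surreal substructure, with parametrisation z ↦ x ∔ z; that is, z ↦ x ∔ z is an isomorphism from (No, <, ⊏) onto (No^{⊒x}, <, ⊏). -/

import Mathlib

open Ordinal

attribute [local instance] Classical.propDecidable

/-- A surreal number presented as a sign sequence: a map from an ordinal (its
length) to `{-1, +1}`, extended by `0` beyond its length. -/
structure SSurreal : Type 1 where
  length : Ordinal.{0}
  sign : Ordinal → ℤ
  sign_mem : ∀ α, α < length → sign α = 1 ∨ sign α = -1
  sign_zero : ∀ α, ¬ α < length → sign α = 0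

namespace SSurreal

/-- Simplicity: `x ⊑ y`, i.e. `x` is an initial segment of `y`. -/
def sle (x y : SSurreal) : Prop := ∀ α, α < x.length → x.sign α = y.sign α

/-- Strict simplicity `x ⊏ y`. -/
def slt (x y : SSurreal) : Prop := sle x y ∧ x ≠ y

/-- The (lexicographic, Conway) order on sign sequences. -/
def lt (x y : SSurreal) : Prop :=
  ∃ α, (∀ β, β < α → x.sign β = y.sign β) ∧ x.sign α < y.sign α

/-- The empty sign sequence, i.e. the surreal number `0`. -/
noncomputable def zero : SSurreal :=
  ⟨0, fun _ => 0, fun α h => absurd h (by simp), fun _ _ => rfl⟩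

/-- The ordinal `o` viewed as the constant `+1` sign sequence of length `o`. -/
noncomputable def ofOrdinal (o : Ordinal) : SSurreal :=
  ⟨o, fun α => if α < o then 1 else 0, fun α h => Or.inl (if_pos h), fun α h => if_neg h⟩

/-- The surreal number `1`. -/
noncomputable def one : SSurreal := ofOrdinal 1

/-- The surreal number `-1`. -/
noncomputable def negOne : SSurreal :=
  ⟨1, fun α => if α < 1 then -1 else 0, fun α h => Or.inr (if_pos h), fun α h => if_neg h⟩

/-- Negation: flip every sign. -/
noncomputable def neg (x : SSurreal) : SSurreal :=
  ⟨x.length, fun α => - x.sign α,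
    fun α h => by rcases x.sign_mem α h with h' | h' <;> simp [h'],
    fun α h => by simp [x.sign_zero α h]⟩

/-- Concatenation `x ∔ y` of sign sequences. -/
noncomputable def concat (x y : SSurreal) : SSurreal where
  length := x.length + y.length
  sign α := if α < x.length then x.sign α else y.sign (α - x.length)
  sign_mem := by
    intro α h
    by_cases hx : α < x.length
    · rw [if_pos hx]; exact x.sign_mem α hx
    · rw [if_neg hx]
      refine y.sign_mem _ ?_
      have hle : x.length ≤ α := not_lt.mp hx
      have := Ordinal.sub_lt_of_le hle (c := y.length)
      exact this.mpr h
  sign_zero := by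
    intro α h
    have hx : ¬ α < x.length := fun hx =>
      h (hx.trans_le le_self_add)
    rw [if_neg hx]
    refine y.sign_zero _ ?_
    intro hy
    exact h ((Ordinal.sub_lt_of_le (not_lt.mp hx)).mp hy)

/-- The concatenation product `x ⨰ y` of sign sequences. -/
noncomputable def mul (x y : SSurreal) : SSurreal where
  length := x.length * y.length
  sign γ := if γ < x.length * y.length then y.sign (γ / x.length) * x.sign (γ % x.length) else 0
  sign_mem := by
    intro γ h
    rw [if_pos h]
    have hx0 : x.length ≠ 0 := by
      intro h0; rw [h0, zero_mul] at h; exact (by simp : ¬ γ < 0) h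
    have h1 : γ / x.length < y.length := by
      rwa [Ordinal.div_lt hx0]
    have h2 : γ % x.length < x.length := Ordinal.mod_lt γ hx0
    rcases y.sign_mem _ h1 with hy | hy <;> rcases x.sign_mem _ h2 with hx | hx <;>
      simp [hy, hx]
  sign_zero := fun γ h => if_neg h

/-- `s` is the supremum of `C` with respect to simplicity. -/
def IsSimpSup (C : Set SSurreal) (s : SSurreal) : Prop :=
  (∀ x ∈ C, sle x s) ∧ ∀ t, (∀ x ∈ C, sle x t) → sle s t

/-- The supremum of a ⊏-chain of sign sequences (their union), when it
exists; junk value `zero` otherwise. -/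
noncomputable def chainSup (C : Set SSurreal) : SSurreal :=
  if h : ∃ s, IsSimpSup C s then h.choose else zero

/-- Transfinite concatenation `[α, f] = ∔_{γ<α} f(γ)`. -/
noncomputable def concatSum (α : Ordinal) (f : Ordinal → SSurreal) : SSurreal :=
  Ordinal.limitRecOn α zero (fun β ih => concat ih (f β))
    (fun γ _ ih => chainSup (Set.range fun p : Set.Iio γ => ih p.1 p.2))

/-- Restriction of `z` to an initial segment of length (at most) `β`. -/
noncomputable def trunc (z : SSurreal) (β : Ordinal) : SSurreal where
  length := min β z.length
  sign α := if α < min β z.length then z.sign α else 0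
  sign_mem := fun α h => by
    rw [if_pos h]; exact z.sign_mem α (h.trans_le (min_le_right _ _))
  sign_zero := fun α h => if_neg h

/-- The number of `+1` signs occurring in `s` strictly below `γ`. -/
noncomputable def countPlus (s : Ordinal → ℤ) (γ : Ordinal) : Ordinal :=
  Ordinal.limitRecOn γ 0 (fun β ih => if s β = 1 then ih + 1 else ih)
    (fun γ' _ ih => ⨆ β : Set.Iio γ', ih β.1 β.2)

/-- `τ_u`: the ordinal number of `+1` signs in the sign sequence of `u`. -/
noncomputable def tau (u : SSurreal) : Ordinal := countPlus u.sign u.length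

end SSurreal

open SSurreal

theorem SSurreal.ext' {x y : SSurreal} (hl : x.length = y.length)
    (hs : ∀ α, x.sign α = y.sign α) : x = y := by
  cases x; cases y
  dsimp at hl hs
  subst hl
  have : _ = _ := funext hs
  subst this
  rfl

theorem concat_sign_lt (x z : SSurreal) {α : Ordinal} (h : α < x.length) :
    (concat x z).sign α = x.sign α := if_pos h

theorem concat_sign_add (x z : SSurreal) (α : Ordinal) :
    (concat x z).sign (x.length + α) = z.sign α := by
  show (if _ < x.length then _ else _) = _
  rw [if_neg (not_lt.2 le_self_add), Ordinal.add_sub_cancel]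

theorem concat_sign_ge (x z : SSurreal) {α : Ordinal} (h : ¬ α < x.length) :
    (concat x z).sign α = z.sign (α - x.length) := if_neg h

theorem sle_concat (x z : SSurreal) : sle x (concat x z) :=
  fun α h => (concat_sign_lt x z h).symm

theorem concat_inj {x z w : SSurreal} (h : concat x z = concat x w) : z = w := by
  have hs : ∀ α, z.sign α = w.sign α := fun α => by
    rw [← concat_sign_add x z α, h, concat_sign_add]
  have hl : x.length + z.length = x.length + w.length := congrArg SSurreal.length h
  exact SSurreal.ext' (add_left_cancel_iff.1 hl) hs

theorem lt_concat_iff (x z w : SSurreal) : lt z w ↔ lt (concat x z) (concat x w) := by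
  constructor
  · rintro ⟨α, h1, h2⟩
    refine ⟨x.length + α, fun β hβ => ?_, ?_⟩
    · by_cases hb : β < x.length
      · rw [concat_sign_lt x z hb, concat_sign_lt x w hb]
      · rw [concat_sign_ge x z hb, concat_sign_ge x w hb]
        exact h1 _ ((Ordinal.sub_lt_of_le (not_lt.1 hb)).2 hβ)
    · rwa [concat_sign_add, concat_sign_add]
  · rintro ⟨α, h1, h2⟩
    have hle : x.length ≤ α := by
      by_contra hb
      rw [not_le] at hb
      rw [concat_sign_lt x z hb, concat_sign_lt x w hb] at h2
      exact lt_irrefl _ h2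
    have hα : x.length + (α - x.length) = α := Ordinal.add_sub_cancel_of_le hle
    refine ⟨α - x.length, fun β hβ => ?_, ?_⟩
    · have h3 := h1 (x.length + β) (by rw [← hα]; exact (add_lt_add_iff_left _).2 hβ)
      rwa [concat_sign_add, concat_sign_add] at h3
    · rw [← hα, concat_sign_add, concat_sign_add] at h2
      exact h2

theorem sle_concat_iff (x z w : SSurreal) : sle z w ↔ sle (concat x z) (concat x w) := by
  constructor
  · intro h α hα
    by_cases hb : α < x.length
    · rw [concat_sign_lt x z hb, concat_sign_lt x w hb]
    · rw [concat_sign_ge x z hb, concat_sign_ge x w hb]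
      exact h _ ((Ordinal.sub_lt_of_le (not_lt.1 hb)).2 hα)
  · intro h α hα
    have h3 := h (x.length + α) (by exact (add_lt_add_iff_left _).2 hα)
    rwa [concat_sign_add, concat_sign_add] at h3

theorem concat_left_parametrises_extensions' (x : SSurreal) :
    (∀ z w : SSurreal, lt z w ↔ lt (concat x z) (concat x w)) ∧
    (∀ z w : SSurreal, slt z w ↔ slt (concat x z) (concat x w)) ∧
    (∀ z : SSurreal, sle x (concat x z)) ∧
    (∀ y : SSurreal, sle x y → ∃ z, concat x z = y) := by
  refine ⟨lt_concat_iff x, fun z w => ?_, sle_concat x, fun y hy => ?_⟩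
  · unfold slt
    rw [sle_concat_iff x z w]
    constructor
    · rintro ⟨h1, h2⟩; exact ⟨h1, fun h => h2 (concat_inj h)⟩
    · rintro ⟨h1, h2⟩; exact ⟨h1, fun h => h2 (by rw [h])⟩
  · have hle : x.length ≤ y.length := by
      by_contra hb
      rw [not_le] at hb
      have := hy y.length hb
      rw [y.sign_zero _ (lt_irrefl _)] at this
      rcases x.sign_mem _ hb with h' | h' <;> simp [h'] at this
    refine ⟨⟨y.length - x.length,
      fun α => if α < y.length - x.length then y.sign (x.length + α) else 0,
      fun α h => ?_, fun α h => if_neg h⟩, ?_⟩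
    · rw [if_pos h]
      exact y.sign_mem _ (Ordinal.lt_sub.1 h)
    · refine SSurreal.ext' ?_ fun α => ?_
      · exact Ordinal.add_sub_cancel_of_le hle
      · by_cases hb : α < x.length
        · rw [concat_sign_lt x _ hb]; exact hy α hb
        · rw [concat_sign_ge x _ hb]
          dsimp only
          by_cases hc : α - x.length < y.length - x.length
          · rw [if_pos hc, Ordinal.add_sub_cancel_of_le (not_lt.1 hb)]
          · rw [if_neg hc, eq_comm]
            apply y.sign_zero
            intro hd
            exact hc ((Ordinal.sub_lt_of_le (not_lt.1 hb)).2
              (by rwa [Ordinal.add_sub_cancel_of_le hle]))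

open SSurreal in
/-- for every `x`, the map `z ↦ x ∔ z` is a `(<, ⊏)`-isomorphism
from `No` onto the class `No^{⊒x} = { y : x ⊑ y }`; in particular `No^{⊒x}` is
a surreal substructure parametrised by `z ↦ x ∔ z`. -/
theorem concat_left_parametrises_extensions (x : SSurreal) :
    (∀ z w : SSurreal, lt z w ↔ lt (concat x z) (concat x w)) ∧
    (∀ z w : SSurreal, slt z w ↔ slt (concat x z) (concat x w)) ∧
    (∀ z : SSurreal, sle x (concat x z)) ∧
    (∀ y : SSurreal, sle x y → ∃ z, concat x z = y) := by
  exact concat_left_parametrises_extensions' x
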